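/- Let n, m ≥ 1, let R be a real symmetric positive definite m×m matrix, let B, B₁ be real n×m matrices and A₁ a real n×n matrix. For every real symmetric positive semidefinite n×n matrix p, the matrix R + B₁ᵀ p B₁ is positive definite (hence invertible); define Γ(p) = (R + B₁ᵀ p B₁)⁻¹ (Bᵀ p + B₁ᵀ p A₁). Assume L := sup { ‖Γ(p)‖ : p real symmetric positive semidefinite n×n } < ∞. Then there exists a constant K > 0 such that ‖Γ(p₁) − Γ(p₂)‖ ≤ K ‖p₁ − p₂‖ for all real symmetric positive semidefinite n×n matrices p₁, p₂. -/

import Mathlib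

open Matrix

/-- The operator norm of a (rectangular) real matrix induced by the Euclidean norms. -/
noncomputable def euclideanOpNorm {n m : ℕ} (M : Matrix (Fin n) (Fin m) ℝ) : ℝ :=
  ‖LinearMap.toContinuousLinearMap (Matrix.toEuclideanLin M)‖

/-- The feedback gain `Γ(p) = (R + B₁ᵀ p B₁)⁻¹ (Bᵀ p + B₁ᵀ p A₁)` of the
Riccati–Volterra system. -/
noncomputable def feedbackGain {n m : ℕ} (R : Matrix (Fin m) (Fin m) ℝ)
    (B B₁ : Matrix (Fin n) (Fin m) ℝ) (A₁ : Matrix (Fin n) (Fin n) ℝ)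
    (p : Matrix (Fin n) (Fin n) ℝ) : Matrix (Fin m) (Fin n) ℝ :=
  (R + B₁ᵀ * p * B₁)⁻¹ * (Bᵀ * p + B₁ᵀ * p * A₁)

open scoped Matrix.Norms.L2Operator RealInnerProductSpace

lemma euclideanOpNorm_eq {n m : ℕ} (M : Matrix (Fin n) (Fin m) ℝ) :
    euclideanOpNorm M = ‖M‖ := rfl

lemma inner_toEuclideanCLM {k : ℕ} (M : Matrix (Fin k) (Fin k) ℝ) (x : EuclideanSpace ℝ (Fin k)) :
    ⟪x, (toEuclideanCLM (𝕜 := ℝ) M) x⟫ =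
      dotProduct (star ((WithLp.equiv 2 _) x)) (M *ᵥ ((WithLp.equiv 2 _) x)) := by
  rw [EuclideanSpace.inner_eq_star_dotProduct, dotProduct_comm]; rfl

lemma posdef_coercive {k : ℕ} (hk : 1 ≤ k) {R : Matrix (Fin k) (Fin k) ℝ} (hR : R.PosDef) :
    ∃ c : ℝ, 0 < c ∧ ∀ x : EuclideanSpace ℝ (Fin k),
      c * ‖x‖ ^ 2 ≤ ⟪x, (toEuclideanCLM (𝕜 := ℝ) R) x⟫ := by
  set f : EuclideanSpace ℝ (Fin k) → ℝ := fun x => ⟪x, (toEuclideanCLM (𝕜 := ℝ) R) x⟫ with hf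
  have hcont : Continuous f := continuous_id.inner (toEuclideanCLM (𝕜 := ℝ) R).continuous
  have hpos : ∀ x : EuclideanSpace ℝ (Fin k), x ≠ 0 → 0 < f x := by
    intro x hx
    show (0:ℝ) < ⟪x, (toEuclideanCLM (𝕜 := ℝ) R) x⟫
    rw [inner_toEuclideanCLM]
    exact hR.dotProduct_mulVec_pos (fun h => hx ((WithLp.equiv 2 _).injective (by simpa using h)))
  have hne : (Metric.sphere (0 : EuclideanSpace ℝ (Fin k)) 1).Nonempty := by
    refine ⟨EuclideanSpace.single (⟨0, hk⟩ : Fin k) (1 : ℝ), ?_⟩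
    simp [EuclideanSpace.norm_single]
  obtain ⟨z, hz, hzmin⟩ := (isCompact_sphere (0 : EuclideanSpace ℝ (Fin k)) 1).exists_isMinOn
    hne hcont.continuousOn
  have hz1 : ‖z‖ = 1 := by simpa using hz
  have hzne : z ≠ 0 := by intro h; rw [h] at hz1; simp at hz1
  refine ⟨f z, hpos z hzne, fun x => ?_⟩
  rcases eq_or_ne x 0 with rfl | hx
  · simp [hf]
  · have hxn : (0 : ℝ) < ‖x‖ := norm_pos_iff.mpr hx
    have hu : ‖x‖⁻¹ • x ∈ Metric.sphere (0 : EuclideanSpace ℝ (Fin k)) 1 := by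
      simp [norm_smul, abs_of_nonneg (inv_nonneg.mpr hxn.le), inv_mul_cancel₀ hxn.ne']
    have hmin := hzmin hu
    have hfu : f (‖x‖⁻¹ • x) = ‖x‖⁻¹ * (‖x‖⁻¹ * f x) := by
      show ⟪_, _⟫ = _
      rw [ContinuousLinearMap.map_smul, real_inner_smul_left, real_inner_smul_right]
    have hmin2 : f z ≤ ‖x‖⁻¹ * (‖x‖⁻¹ * f x) := hfu ▸ hmin
    have h1 : ‖x‖⁻¹ * (‖x‖⁻¹ * f x) * ‖x‖ ^ 2 = f x := by
      field_simp
    show f z * ‖x‖ ^ 2 ≤ f x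
    calc f z * ‖x‖ ^ 2 ≤ ‖x‖⁻¹ * (‖x‖⁻¹ * f x) * ‖x‖ ^ 2 :=
          mul_le_mul_of_nonneg_right hmin2 (sq_nonneg _)
      _ = f x := h1

lemma inv_opNorm_le {k : ℕ} {M : Matrix (Fin k) (Fin k) ℝ} (hM : M.PosDef)
    {c : ℝ} (hc : 0 < c)
    (hco : ∀ x : EuclideanSpace ℝ (Fin k),
      c * ‖x‖ ^ 2 ≤ ⟪x, (toEuclideanCLM (𝕜 := ℝ) M) x⟫) :
    ‖M⁻¹‖ ≤ c⁻¹ := by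
  have hdet : IsUnit M.det := isUnit_iff_ne_zero.mpr hM.det_pos.ne'
  rw [Matrix.cstar_norm_def]
  refine ContinuousLinearMap.opNorm_le_bound _ (by positivity) fun x => ?_
  set y := toEuclideanCLM (𝕜 := ℝ) M⁻¹ x with hy
  have hMy : toEuclideanCLM (𝕜 := ℝ) M y = x := by
    rw [hy, ← ContinuousLinearMap.mul_apply, ← _root_.map_mul, Matrix.mul_nonsing_inv _ hdet,
      _root_.map_one, ContinuousLinearMap.one_apply]
  have h1 : c * ‖y‖ ^ 2 ≤ ⟪y, x⟫ := by rw [← hMy]; exact hco y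
  have h2 : ⟪y, x⟫ ≤ ‖y‖ * ‖x‖ := real_inner_le_norm y x
  rcases eq_or_ne y 0 with h | h
  · rw [h]; simp; positivity
  · have hyn : (0 : ℝ) < ‖y‖ := norm_pos_iff.mpr h
    have h3 : c * ‖y‖ ≤ ‖x‖ := by nlinarith
    rw [inv_mul_eq_div, le_div_iff₀ hc]
    linarith [mul_comm c ‖y‖]

lemma gain_diff {n m : ℕ} (R : Matrix (Fin m) (Fin m) ℝ) (B B₁ : Matrix (Fin n) (Fin m) ℝ)
    (A₁ : Matrix (Fin n) (Fin n) ℝ) (p₁ p₂ : Matrix (Fin n) (Fin n) ℝ)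
    (h₁ : IsUnit (R + B₁ᵀ * p₁ * B₁).det) (h₂ : IsUnit (R + B₁ᵀ * p₂ * B₁).det) :
    feedbackGain R B B₁ A₁ p₁ - feedbackGain R B B₁ A₁ p₂ =
      (R + B₁ᵀ * p₁ * B₁)⁻¹ *
        (Bᵀ * (p₁ - p₂) + B₁ᵀ * (p₁ - p₂) * A₁
          - B₁ᵀ * (p₁ - p₂) * B₁ * feedbackGain R B B₁ A₁ p₂) := by
  set M₁ := R + B₁ᵀ * p₁ * B₁ with hM₁
  set M₂ := R + B₁ᵀ * p₂ * B₁ with hM₂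
  set Γ₂ := feedbackGain R B B₁ A₁ p₂ with hΓ₂
  have key : Bᵀ * (p₁ - p₂) + B₁ᵀ * (p₁ - p₂) * A₁ - B₁ᵀ * (p₁ - p₂) * B₁ * Γ₂
      = (Bᵀ * p₁ + B₁ᵀ * p₁ * A₁) - (Bᵀ * p₂ + B₁ᵀ * p₂ * A₁) - (M₁ - M₂) * Γ₂ := by
    rw [hM₁, hM₂]
    simp only [Matrix.mul_sub, Matrix.sub_mul, Matrix.mul_add, Matrix.add_mul]
    abel
  have hM₂Γ : M₂ * Γ₂ = Bᵀ * p₂ + B₁ᵀ * p₂ * A₁ := by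
    rw [hΓ₂, feedbackGain, ← hM₂, ← Matrix.mul_assoc, Matrix.mul_nonsing_inv _ h₂, Matrix.one_mul]
  rw [key]
  have expand : M₁⁻¹ * ((Bᵀ * p₁ + B₁ᵀ * p₁ * A₁) - (Bᵀ * p₂ + B₁ᵀ * p₂ * A₁) - (M₁ - M₂) * Γ₂)
      = M₁⁻¹ * (Bᵀ * p₁ + B₁ᵀ * p₁ * A₁) - M₁⁻¹ * (Bᵀ * p₂ + B₁ᵀ * p₂ * A₁)
        - M₁⁻¹ * (M₁ * Γ₂) + M₁⁻¹ * (M₂ * Γ₂) := by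
    simp only [Matrix.mul_sub, Matrix.sub_mul, Matrix.mul_add, Matrix.add_mul, Matrix.mul_assoc]
    abel
  have hcancel : M₁⁻¹ * (M₁ * Γ₂) = Γ₂ := by
    rw [← Matrix.mul_assoc, Matrix.nonsing_inv_mul _ h₁, Matrix.one_mul]
  rw [expand, hcancel, hM₂Γ]
  show feedbackGain R B B₁ A₁ p₁ - Γ₂ = _
  rw [feedbackGain, ← hM₁]
  abel

/-- With `R` symmetric positive definite: for every symmetric
positive semidefinite `p` the matrix `R + B₁ᵀ p B₁` is positive definite, and if
`Γ` is bounded (in Euclidean operator norm) by `L` over all symmetric positive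
semidefinite `p`, then `Γ` is Lipschitz on that set: there is `K > 0` with
`‖Γ(p₁) - Γ(p₂)‖ ≤ K ‖p₁ - p₂‖`. -/
theorem statement15 (n m : ℕ) (hn : 1 ≤ n) (hm : 1 ≤ m)
    (R : Matrix (Fin m) (Fin m) ℝ) (hRs : R.IsSymm) (hRpd : R.PosDef)
    (B B₁ : Matrix (Fin n) (Fin m) ℝ) (A₁ : Matrix (Fin n) (Fin n) ℝ)
    (L : ℝ)
    (hL : ∀ p : Matrix (Fin n) (Fin n) ℝ, p.IsSymm → p.PosSemidef →
      euclideanOpNorm (feedbackGain R B B₁ A₁ p) ≤ L) :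
    (∀ p : Matrix (Fin n) (Fin n) ℝ, p.IsSymm → p.PosSemidef →
      (R + B₁ᵀ * p * B₁).PosDef) ∧
    ∃ K : ℝ, 0 < K ∧
      ∀ p₁ p₂ : Matrix (Fin n) (Fin n) ℝ,
        p₁.IsSymm → p₁.PosSemidef → p₂.IsSymm → p₂.PosSemidef →
        euclideanOpNorm (feedbackGain R B B₁ A₁ p₁ - feedbackGain R B B₁ A₁ p₂)
          ≤ K * euclideanOpNorm (p₁ - p₂) := by
  -- positive semidefiniteness of the conjugated term
  have hQ : ∀ p : Matrix (Fin n) (Fin n) ℝ, p.PosSemidef → (B₁ᵀ * p * B₁).PosSemidef := by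
    intro p hp
    have := hp.conjTranspose_mul_mul_same B₁
    simpa [Matrix.conjTranspose_eq_transpose_of_trivial] using this
  -- positive definiteness of `M p = R + B₁ᵀ p B₁`
  have hMpd : ∀ p : Matrix (Fin n) (Fin n) ℝ, p.PosSemidef → (R + B₁ᵀ * p * B₁).PosDef :=
    fun p hp => hRpd.add_posSemidef (hQ p hp)
  refine ⟨fun p _ hp => hMpd p hp, ?_⟩
  -- coercivity constant from `R`
  obtain ⟨c, hc, hcoR⟩ := posdef_coercive hm hRpd
  have hcoM : ∀ p : Matrix (Fin n) (Fin n) ℝ, p.PosSemidef →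
      ∀ x : EuclideanSpace ℝ (Fin m),
        c * ‖x‖ ^ 2 ≤ ⟪x, (toEuclideanCLM (𝕜 := ℝ) (R + B₁ᵀ * p * B₁)) x⟫ := by
    intro p hp x
    have hsplit : ⟪x, (toEuclideanCLM (𝕜 := ℝ) (R + B₁ᵀ * p * B₁)) x⟫
        = ⟪x, (toEuclideanCLM (𝕜 := ℝ) R) x⟫
          + ⟪x, (toEuclideanCLM (𝕜 := ℝ) (B₁ᵀ * p * B₁)) x⟫ := by
      rw [map_add, ContinuousLinearMap.add_apply, inner_add_right]
    have hQx : (0:ℝ) ≤ ⟪x, (toEuclideanCLM (𝕜 := ℝ) (B₁ᵀ * p * B₁)) x⟫ := by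
      rw [inner_toEuclideanCLM]
      exact (hQ p hp).dotProduct_mulVec_nonneg _
    have := hcoR x
    rw [hsplit]
    linarith
  have hinv : ∀ p : Matrix (Fin n) (Fin n) ℝ, p.PosSemidef →
      ‖(R + B₁ᵀ * p * B₁)⁻¹‖ ≤ c⁻¹ :=
    fun p hp => inv_opNorm_le (hMpd p hp) hc (hcoM p hp)
  -- `L` is nonnegative
  have hL0 : 0 ≤ L :=
    le_trans (norm_nonneg _) (hL 0 (by simp [Matrix.IsSymm]) Matrix.PosSemidef.zero)
  set K : ℝ := c⁻¹ * (‖Bᵀ‖ + ‖B₁ᵀ‖ * ‖A₁‖ + ‖B₁ᵀ‖ * ‖B₁‖ * L) + 1 with hK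
  have hKS : 0 ≤ ‖Bᵀ‖ + ‖B₁ᵀ‖ * ‖A₁‖ + ‖B₁ᵀ‖ * ‖B₁‖ * L := by
    have := norm_nonneg Bᵀ
    have := norm_nonneg B₁ᵀ
    have := norm_nonneg A₁
    have := norm_nonneg B₁
    have h1 : (0:ℝ) ≤ ‖B₁ᵀ‖ * ‖A₁‖ := mul_nonneg (norm_nonneg _) (norm_nonneg _)
    have h2 : (0:ℝ) ≤ ‖B₁ᵀ‖ * ‖B₁‖ * L :=
      mul_nonneg (mul_nonneg (norm_nonneg _) (norm_nonneg _)) hL0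
    linarith
  have hKpos : 0 < K := by
    have : (0:ℝ) ≤ c⁻¹ * (‖Bᵀ‖ + ‖B₁ᵀ‖ * ‖A₁‖ + ‖B₁ᵀ‖ * ‖B₁‖ * L) :=
      mul_nonneg (inv_nonneg.mpr hc.le) hKS
    rw [hK]; linarith
  refine ⟨K, hKpos, fun p₁ p₂ hs₁ hp₁ hs₂ hp₂ => ?_⟩
  have hdet₁ : IsUnit (R + B₁ᵀ * p₁ * B₁).det :=
    isUnit_iff_ne_zero.mpr (hMpd p₁ hp₁).det_pos.ne'
  have hdet₂ : IsUnit (R + B₁ᵀ * p₂ * B₁).det :=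
    isUnit_iff_ne_zero.mpr (hMpd p₂ hp₂).det_pos.ne'
  rw [euclideanOpNorm_eq, euclideanOpNorm_eq, gain_diff R B B₁ A₁ p₁ p₂ hdet₁ hdet₂]
  set d := p₁ - p₂ with hd
  set Γ₂ := feedbackGain R B B₁ A₁ p₂ with hΓ₂
  have hΓ₂L : ‖Γ₂‖ ≤ L := hL p₂ hs₂ hp₂
  have h1 : ‖Bᵀ * d‖ ≤ ‖Bᵀ‖ * ‖d‖ := Matrix.l2_opNorm_mul _ _
  have h3 : ‖B₁ᵀ * d * A₁‖ ≤ ‖B₁ᵀ‖ * ‖d‖ * ‖A₁‖ :=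
    (Matrix.l2_opNorm_mul _ _).trans
      (mul_le_mul_of_nonneg_right (Matrix.l2_opNorm_mul _ _) (norm_nonneg _))
  have h4 : ‖B₁ᵀ * d * B₁‖ ≤ ‖B₁ᵀ‖ * ‖d‖ * ‖B₁‖ :=
    (Matrix.l2_opNorm_mul _ _).trans
      (mul_le_mul_of_nonneg_right (Matrix.l2_opNorm_mul _ _) (norm_nonneg _))
  have h5 : ‖B₁ᵀ * d * B₁ * Γ₂‖ ≤ ‖B₁ᵀ‖ * ‖d‖ * ‖B₁‖ * L :=
    (Matrix.l2_opNorm_mul _ _).trans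
      (mul_le_mul h4 hΓ₂L (norm_nonneg _)
        (mul_nonneg (mul_nonneg (norm_nonneg _) (norm_nonneg _)) (norm_nonneg _)))
  have hE : ‖Bᵀ * d + B₁ᵀ * d * A₁ - B₁ᵀ * d * B₁ * Γ₂‖
      ≤ ‖Bᵀ‖ * ‖d‖ + ‖B₁ᵀ‖ * ‖d‖ * ‖A₁‖ + ‖B₁ᵀ‖ * ‖d‖ * ‖B₁‖ * L := by
    calc ‖Bᵀ * d + B₁ᵀ * d * A₁ - B₁ᵀ * d * B₁ * Γ₂‖
        ≤ ‖Bᵀ * d + B₁ᵀ * d * A₁‖ + ‖B₁ᵀ * d * B₁ * Γ₂‖ := norm_sub_le _ _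
      _ ≤ ‖Bᵀ * d‖ + ‖B₁ᵀ * d * A₁‖ + ‖B₁ᵀ * d * B₁ * Γ₂‖ := by
          have := norm_add_le (Bᵀ * d) (B₁ᵀ * d * A₁)
          linarith
      _ ≤ ‖Bᵀ‖ * ‖d‖ + ‖B₁ᵀ‖ * ‖d‖ * ‖A₁‖ + ‖B₁ᵀ‖ * ‖d‖ * ‖B₁‖ * L := by linarith
  calc ‖(R + B₁ᵀ * p₁ * B₁)⁻¹ * (Bᵀ * d + B₁ᵀ * d * A₁ - B₁ᵀ * d * B₁ * Γ₂)‖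
      ≤ ‖(R + B₁ᵀ * p₁ * B₁)⁻¹‖ * ‖Bᵀ * d + B₁ᵀ * d * A₁ - B₁ᵀ * d * B₁ * Γ₂‖ :=
        Matrix.l2_opNorm_mul _ _
    _ ≤ c⁻¹ * (‖Bᵀ‖ * ‖d‖ + ‖B₁ᵀ‖ * ‖d‖ * ‖A₁‖ + ‖B₁ᵀ‖ * ‖d‖ * ‖B₁‖ * L) :=
        mul_le_mul (hinv p₁ hp₁) hE (norm_nonneg _) (inv_nonneg.mpr hc.le)
    _ = (c⁻¹ * (‖Bᵀ‖ + ‖B₁ᵀ‖ * ‖A₁‖ + ‖B₁ᵀ‖ * ‖B₁‖ * L)) * ‖d‖ := by ring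
    _ ≤ K * ‖d‖ := by
        refine mul_le_mul_of_nonneg_right ?_ (norm_nonneg _)
        rw [hK]; linarith
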